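/- Let p be an odd prime, n ≥ 1 a natural number, and set d = gcd(n, p−1). Suppose d > 1 and write p = d·s + 1 with s = (p−1)/d, and assume s ≥ 2. Then every element of ℤ/pℤ is a sum of d n-th powers; that is, for every c ∈ ℤ/pℤ there exist x_1, …, x_d ∈ ℤ/pℤ with x_1^n + ⋯ + x_d^n = c. -/

import Mathlib

open Finset Pointwise

/-- Odd prime `p`, `n ≥ 1`, `d = gcd(n, p-1) > 1`, `p = d·s + 1` with
`s = (p-1)/d ≥ 2`: every element of `ℤ/pℤ` is a sum of `d` `n`-th powers. -/
theorem stmt_8 (p n d s : ℕ) (hp : p.Prime) (hp2 : p ≠ 2) (hn : 1 ≤ n)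
    (hd : d = Nat.gcd n (p - 1)) (hd1 : 1 < d) (hs : s = (p - 1) / d)
    (hpds : p = d * s + 1) (hs2 : 2 ≤ s) :
    ∀ c : ZMod p, ∃ x : Fin d → ZMod p, ∑ i, x i ^ n = c := by
  haveI : Fact p.Prime := ⟨hp⟩
  classical
  -- The set of nonzero n-th powers
  set T : Finset (ZMod p) :=
    Finset.image (fun u : (ZMod p)ˣ => (u : ZMod p) ^ n) Finset.univ with hT
  set S : Finset (ZMod p) := insert 0 T with hS
  -- every element of S is an n-th power
  have hSpow : ∀ b ∈ S, ∃ y : ZMod p, y ^ n = b := by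
    intro b hb
    rcases Finset.mem_insert.1 hb with h | h
    · exact ⟨0, by rw [h, zero_pow (by omega)]⟩
    · obtain ⟨u, _, hu⟩ := Finset.mem_image.1 h
      exact ⟨u, hu⟩
  have h0S : (0 : ZMod p) ∈ S := Finset.mem_insert_self _ _
  have hSne : S.Nonempty := ⟨0, h0S⟩
  -- kernel bound : solutions of w^n = 1 in units have card ≤ d
  have hker : ((Finset.univ : Finset (ZMod p)ˣ).filter (fun w => w ^ n = 1)).card ≤ d := by
    have hsub : ((Finset.univ : Finset (ZMod p)ˣ).filter (fun w => w ^ n = 1)) ⊆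
        ((Finset.univ : Finset (ZMod p)ˣ).filter (fun w => w ^ d = 1)) := by
      intro w hw
      simp only [Finset.mem_filter, Finset.mem_univ, true_and] at hw ⊢
      have h1 : orderOf w ∣ n := orderOf_dvd_of_pow_eq_one hw
      have h2 : orderOf w ∣ p - 1 := by
        have := orderOf_dvd_card (x := w)
        rwa [ZMod.card_units p] at this
      have : orderOf w ∣ d := hd ▸ Nat.dvd_gcd h1 h2
      exact orderOf_dvd_iff_pow_eq_one.1 this
    calc _ ≤ _ := Finset.card_le_card hsub
      _ ≤ d := by
        have := IsCyclic.card_pow_eq_one_le (α := (ZMod p)ˣ) (n := d) (by omega)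
        convert this using 2
  -- card of T is at least s
  have hTcard : s ≤ T.card := by
    have hfib : ∀ a ∈ T,
        (Finset.filter (fun v : (ZMod p)ˣ => (v : ZMod p) ^ n = a)
          (Finset.univ : Finset (ZMod p)ˣ)).card ≤ d := by
      intro a ha
      obtain ⟨u, _, hu⟩ := Finset.mem_image.1 ha
      refine le_trans ?_ hker
      apply Finset.card_le_card_of_injOn (fun v => v * u⁻¹)
      · intro v hv
        simp only [Finset.mem_coe, Finset.mem_filter, Finset.mem_univ, true_and] at hv ⊢
        have : ((v : ZMod p)) ^ n = ((u : ZMod p)) ^ n := by rw [hv, ← hu]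
        have hvu : v ^ n = u ^ n := Units.ext (by push_cast; exact this)
        rw [mul_pow, hvu, ← mul_pow, mul_inv_cancel, one_pow]
      · intro x _ y _ hxy
        exact mul_right_cancel hxy
    have := Finset.card_le_mul_card_image (f := fun u : (ZMod p)ˣ => ((u : ZMod p)) ^ n)
      Finset.univ d hfib
    rw [Finset.card_univ, ZMod.card_units p, ← hT] at this
    have hdpos : 0 < d := by omega
    -- p - 1 = d * s ≤ d * T.card
    have : d * s ≤ d * T.card := by
      calc d * s = p - 1 := by omega
        _ ≤ d * T.card := this
    exact Nat.le_of_mul_le_mul_left this hdpos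
  have hScard : s + 1 ≤ S.card := by
    have h0T : (0 : ZMod p) ∉ T := by
      intro h
      obtain ⟨u, _, hu⟩ := Finset.mem_image.1 h
      exact (pow_ne_zero n (Units.ne_zero u)) hu
    rw [hS, Finset.card_insert_of_notMem h0T]
    omega
  -- iterated sumsets
  set iter : ℕ → Finset (ZMod p) := fun k => Nat.rec {0} (fun _ B => B + S) k with hiter
  have hiter0 : iter 0 = {0} := rfl
  have hitersucc : ∀ k, iter (k + 1) = iter k + S := fun k => rfl
  have hiterne : ∀ k, (iter k).Nonempty := by
    intro k
    induction k with
    | zero => exact ⟨0, by simp [hiter0]⟩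
    | succ k ih => rw [hitersucc]; exact ih.add hSne
  -- cardinality lower bound
  have hcard : ∀ k, min p (k * s + 1) ≤ (iter k).card := by
    intro k
    induction k with
    | zero => rw [hiter0, Finset.card_singleton]; omega
    | succ k ih =>
      rw [hitersucc]
      have hcd := ZMod.cauchy_davenport hp (hiterne k) hSne
      rcases le_or_gt p (k * s + 1) with h | h
      · have hik : p ≤ (iter k).card := le_trans (by rw [min_eq_left h]) ih
        have h2 : (iter k).card ≤ (iter k + S).card :=
          Finset.card_le_card_add_right hSne
        exact le_trans (min_le_left _ _) (le_trans hik h2)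
      · rw [min_eq_right (by omega)] at ih
        refine le_trans ?_ hcd
        have h2 : (k + 1) * s + 1 ≤ (iter k).card + S.card - 1 := by
          have := hScard
          have hmul : (k + 1) * s = k * s + s := by ring
          omega
        exact min_le_min (le_refl p) h2
  -- membership extraction
  have hmem : ∀ k, ∀ c : ZMod p, c ∈ iter k → ∃ x : Fin k → ZMod p, ∑ i, x i ^ n = c := by
    intro k
    induction k with
    | zero =>
      intro c hc
      rw [hiter0, Finset.mem_singleton] at hc
      exact ⟨fun i => 0, by simp [hc.symm]⟩
    | succ k ih =>
      intro c hc
      rw [hitersucc, Finset.mem_add] at hc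
      obtain ⟨a, ha, b, hb, hab⟩ := hc
      obtain ⟨x, hx⟩ := ih a ha
      obtain ⟨y, hy⟩ := hSpow b hb
      refine ⟨Fin.cons y x, ?_⟩
      rw [Fin.sum_univ_succ]
      simp only [Fin.cons_zero, Fin.cons_succ]
      rw [hy, hx, ← hab, add_comm]
  -- at k = d, the sumset is everything
  intro c
  have hd_card : p ≤ (iter d).card := by
    have := hcard d
    omega
  have : iter d = Finset.univ := by
    apply Finset.eq_univ_of_card
    have hle : (iter d).card ≤ Fintype.card (ZMod p) := Finset.card_le_univ _
    have hcp : Fintype.card (ZMod p) = p := ZMod.card p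
    omega
  exact hmem d c (this ▸ Finset.mem_univ c)
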